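/- Let T₁, …, Tₙ be distinct equilateral triangles inscribed in the unit circle C (vertices on the boundary of C), and let S be the set of vertices of the polygon ∩ᵢ Tᵢ. If T is any triangle with S ⊆ T ⊆ C, then T ∈ {T₁, …, Tₙ}. -/

import Mathlib

set_option maxHeartbeats 1000000

open Metric

/-- An equilateral triangle inscribed in the unit circle of ℝ², given by its vertices. -/
def InscribedEquilateral (p : Fin 3 → EuclideanSpace ℝ (Fin 2)) : Prop :=
  AffineIndependent ℝ p ∧
  (∀ a, dist (p a) (0 : EuclideanSpace ℝ (Fin 2)) = 1) ∧
  ∀ a b, a ≠ b → dist (p a) (p b) = dist (p 0) (p 1)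

open RealInnerProductSpace

noncomputable section
namespace Stmt13

abbrev V2 := EuclideanSpace ℝ (Fin 2)

lemma inner2 (x y : V2) : ⟪x, y⟫ = x 0 * y 0 + x 1 * y 1 := by
  simp [PiLp.inner_apply, Fin.sum_univ_two, RCLike.inner_apply, conj_trivial]; ring

lemma normsq2 (x : V2) : ‖x‖ ^ 2 = x 0 ^ 2 + x 1 ^ 2 := by
  rw [← real_inner_self_eq_norm_sq, inner2]; ring

def mk2 (a b : ℝ) : V2 := (WithLp.equiv 2 (Fin 2 → ℝ)).symm ![a, b]

@[simp] lemma mk2_zero (a b : ℝ) : mk2 a b 0 = a := rfl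
@[simp] lemma mk2_one (a b : ℝ) : mk2 a b 1 = b := rfl

lemma ext2 {x y : V2} (h0 : x 0 = y 0) (h1 : x 1 = y 1) : x = y := by
  ext i
  fin_cases i
  · exact h0
  · exact h1

lemma planar_id (x0 x1 u0 u1 v0 v1 : ℝ) :
    (u0*v1 - u1*v0)^2 * (x0^2+x1^2)
      = (x0*u0+x1*u1)^2*(v0^2+v1^2) + (x0*v0+x1*v1)^2*(u0^2+u1^2)
        - 2*(u0*v0+u1*v1)*(x0*u0+x1*u1)*(x0*v0+x1*v1) := by ring

lemma step2 (μa μb ea eb t D nc : ℝ) (hμa : 0 < μa) (hμb : 0 < μb)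
    (hea : μa/2 ≤ ea) (heb : μb/2 ≤ eb) (hnc0 : 0 ≤ nc) (hnc1 : nc ≤ 1)
    (hD2 : μa^2*μb^2 - t^2 = D^2) (hD : D ≠ 0)
    (hid : ea^2*μb^2 + eb^2*μa^2 - 2*t*ea*eb = D^2 * nc) :
    0 ≤ 2*t + μa*μb := by
  by_contra hcon
  push_neg at hcon
  have hP : 0 < μa*μb := mul_pos hμa hμb
  have ht : t < -(μa*μb)/2 := by linarith
  have htneg : t < 0 := by nlinarith
  have hD2pos : 0 < D^2 := by positivity
  have he : μa*μb/4 ≤ ea*eb := by nlinarith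
  have h1 : 2*(ea*eb)*((μa*μb) - t) ≤ D^2*nc := by
    nlinarith [sq_nonneg (ea*μb - eb*μa)]
  have h2 : D^2*nc ≤ μa^2*μb^2 - t^2 := by nlinarith
  have h3 : 2*(μa*μb/4)*((μa*μb) - t) ≤ 2*(ea*eb)*((μa*μb) - t) := by nlinarith
  nlinarith
  done

lemma step5 (μ ea eb nc : ℝ) (hμ : 0 < μ) (hea : μ/2 ≤ ea) (heb : μ/2 ≤ eb)
    (hnc1 : nc ≤ 1)
    (hid : ea^2*μ^2 + eb^2*μ^2 + μ^2*(ea*eb) = (3/4)*μ^4*nc) :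
    ea = μ/2 ∧ eb = μ/2 ∧ nc = 1 := by
  have hμ2 : (0:ℝ) < μ^2 := by positivity
  have h1 : ea^2+eb^2+ea*eb ≤ (3/4)*μ^2 := by
    have h : μ^2*(ea^2+eb^2+ea*eb) ≤ μ^2*((3/4)*μ^2) := by nlinarith [mul_nonneg (pow_nonneg hμ.le 4) (sub_nonneg.2 hnc1)]
    exact le_of_mul_le_mul_left h hμ2
  have s4 : 0 ≤ μ*(ea - μ/2) := mul_nonneg hμ.le (by linarith)
  have s5 : 0 ≤ μ*(eb - μ/2) := mul_nonneg hμ.le (by linarith)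
  have key : (ea-μ/2)^2 + (eb-μ/2)^2 + (ea-μ/2)*(eb-μ/2)
      + (3/2)*(μ*(ea-μ/2)) + (3/2)*(μ*(eb-μ/2)) ≤ 0 := by nlinarith
  have hprod : 0 ≤ (ea-μ/2)*(eb-μ/2) :=
    mul_nonneg (by linarith) (by linarith)
  have hs4 : μ*(ea - μ/2) = 0 := by nlinarith [sq_nonneg (ea-μ/2), sq_nonneg (eb-μ/2)]
  have hs5 : μ*(eb - μ/2) = 0 := by nlinarith [sq_nonneg (ea-μ/2), sq_nonneg (eb-μ/2)]
  have hea' : ea = μ/2 := by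
    rcases mul_eq_zero.1 hs4 with h | h
    · exact absurd h (ne_of_gt hμ)
    · linarith
  have heb' : eb = μ/2 := by
    rcases mul_eq_zero.1 hs5 with h | h
    · exact absurd h (ne_of_gt hμ)
    · linarith
  refine ⟨hea', heb', ?_⟩
  rw [hea', heb'] at hid
  have hμ4 : (0:ℝ) < (3/4)*μ^4 := by positivity
  have : (3/4)*μ^4*1 = (3/4)*μ^4*nc := by linarith [hid]
  exact (mul_left_cancel₀ (ne_of_gt hμ4) this).symm

lemma step4 (μ0 μ1 μ2 t01 t02 t12 : ℝ)
    (h01 : 0 ≤ 2*t01 + μ0*μ1) (h02 : 0 ≤ 2*t02 + μ0*μ2) (h12 : 0 ≤ 2*t12 + μ1*μ2)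
    (hsum : μ0^2 + μ1^2 + μ2^2 + 2*(t01+t02+t12) = 0) :
    μ0 = μ1 ∧ μ0 = μ2 ∧ 2*t01 + μ0*μ1 = 0 ∧ 2*t02 + μ0*μ2 = 0 ∧ 2*t12 + μ1*μ2 = 0 := by
  have key : (μ0-μ1)^2 + (μ0-μ2)^2 + (μ1-μ2)^2
      + 2*((2*t01+μ0*μ1) + (2*t02+μ0*μ2) + (2*t12+μ1*μ2)) = 0 := by linarith [hsum, sq_nonneg (μ0-μ1)]
  have e01 : 2*t01+μ0*μ1 = 0 := by nlinarith [sq_nonneg (μ0-μ1), sq_nonneg (μ0-μ2), sq_nonneg (μ1-μ2)]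
  have e02 : 2*t02+μ0*μ2 = 0 := by nlinarith [sq_nonneg (μ0-μ1), sq_nonneg (μ0-μ2), sq_nonneg (μ1-μ2)]
  have e12 : 2*t12+μ1*μ2 = 0 := by nlinarith [sq_nonneg (μ0-μ1), sq_nonneg (μ0-μ2), sq_nonneg (μ1-μ2)]
  have k2 : (μ0-μ1)^2 + (μ0-μ2)^2 + (μ1-μ2)^2 = 0 := by linarith
  have m01 : (μ0-μ1)^2 = 0 := by nlinarith [sq_nonneg (μ0-μ2), sq_nonneg (μ1-μ2)]
  have m02 : (μ0-μ2)^2 = 0 := by nlinarith [sq_nonneg (μ0-μ1), sq_nonneg (μ1-μ2)]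
  refine ⟨?_, ?_, e01, e02, e12⟩
  · have := pow_eq_zero_iff (n := 2) (by norm_num) |>.1 m01; linarith [sub_eq_zero.1 this]
  · have := pow_eq_zero_iff (n := 2) (by norm_num) |>.1 m02; linarith [sub_eq_zero.1 this]

/-- cross product of the two edge vectors is nonzero for affinely independent triples -/
lemma cross_ne_zero {p : Fin 3 → V2} (hp : AffineIndependent ℝ p) :
    (p 1 0 - p 0 0) * (p 2 1 - p 0 1) - (p 1 1 - p 0 1) * (p 2 0 - p 0 0) ≠ 0 := by
  intro hD
  set u0 := p 1 0 - p 0 0 with hu0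
  set u1 := p 1 1 - p 0 1 with hu1
  set v0 := p 2 0 - p 0 0 with hv0
  set v1 := p 2 1 - p 0 1 with hv1
  have key : ∀ a b : ℝ, a • (p 1 - p 0) + b • (p 2 - p 0) = 0 → a = 0 ∧ b = 0 := by
    intro a b hab
    have h := affineIndependent_iff.1 hp Finset.univ ![-(a+b), a, b] (by
      rw [Fin.sum_univ_three]; simp) (by
      rw [Fin.sum_univ_three]
      have : (-(a+b)) • p 0 + a • p 1 + b • p 2
          = a • (p 1 - p 0) + b • (p 2 - p 0) := by
        simp [smul_sub, sub_smul, add_smul, neg_smul]; abel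
      simpa [Matrix.cons_val_zero, Matrix.cons_val_one] using this.trans hab)
    exact ⟨by simpa using h 1 (Finset.mem_univ _), by simpa using h 2 (Finset.mem_univ _)⟩
  by_cases hu : p 1 - p 0 = 0
  · have := key 1 0 (by simp [hu])
    exact one_ne_zero this.1
  · have hn : u0 ^ 2 + u1 ^ 2 ≠ 0 := by
      intro h
      apply hu
      have h0 : u0 = 0 := by nlinarith [sq_nonneg u0, sq_nonneg u1]
      have h1 : u1 = 0 := by nlinarith [sq_nonneg u0, sq_nonneg u1]
      apply ext2 <;> simp only [PiLp.sub_apply, PiLp.zero_apply]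
      · linarith [h0]
      · linarith [h1]
    have := key (v0 * u0 + v1 * u1) (-(u0 ^ 2 + u1 ^ 2)) (by
      apply ext2 <;>
        simp only [PiLp.add_apply, PiLp.smul_apply, PiLp.sub_apply, PiLp.zero_apply,
          smul_eq_mul]
      · linear_combination u1 * hD
      · linear_combination (-u0) * hD)
    have h2 := this.2
    exact hn (by linarith [neg_eq_zero.1 h2])
  done


def Config (p : Fin 3 → V2) : Prop :=
  (∀ a, ‖p a‖ = 1) ∧ (∀ a b, a ≠ b → ⟪p a, p b⟫ = -(1/2)) ∧ p 0 + p 1 + p 2 = 0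

lemma gram_aux (a0 a1 b0 b1 c0 c1 t : ℝ)
    (n0 : a0^2+a1^2 = 1) (n1 : b0^2+b1^2 = 1) (n2 : c0^2+c1^2 = 1)
    (e01 : a0*b0+a1*b1 = t) (e02 : a0*c0+a1*c1 = t) (e12 : b0*c0+b1*c1 = t) :
    (t-1)^2*(2*t+1) = 0 := by
  linear_combination ((b0*c0+b1*c1)^2 - (b0^2+b1^2)*(c0^2+c1^2)) * n0
    + ((a0*c0+a1*c1)^2 - (c0^2+c1^2)) * n1
    + ((a0*b0+a1*b1)^2 - 1) * n2
    + ((a0*b0+a1*b1) + t - 2*(a0*c0+a1*c1)*(b0*c0+b1*c1)) * e01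
    + ((a0*c0+a1*c1) + t - 2*t*(b0*c0+b1*c1)) * e02
    + ((b0*c0+b1*c1) + t - 2*t^2) * e12

lemma config_of_inscribed {p : Fin 3 → V2} (haff : AffineIndependent ℝ p)
    (hnorm : ∀ a, dist (p a) (0 : V2) = 1)
    (hdist : ∀ a b, a ≠ b → dist (p a) (p b) = dist (p 0) (p 1)) : Config p := by
  have hn : ∀ a, ‖p a‖ = 1 := fun a => by simpa [dist_zero_right] using hnorm a
  have hnc : ∀ a : Fin 3, p a 0 ^ 2 + p a 1 ^ 2 = 1 := by
    intro a; rw [← normsq2, hn a]; norm_num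
  have hd : ∀ a b : Fin 3, dist (p a) (p b) ^ 2 = 2 - 2 * ⟪p a, p b⟫ := by
    intro a b
    rw [dist_eq_norm, ← real_inner_self_eq_norm_sq, inner_sub_sub_self]
    rw [real_inner_self_eq_norm_sq, real_inner_self_eq_norm_sq, hn a, hn b,
      real_inner_comm (p b) (p a)]
    ring
  have heq : ∀ a b : Fin 3, a ≠ b → ⟪p a, p b⟫ = ⟪p 0, p 1⟫ := by
    intro a b hab
    have h1 := hd a b
    have h2 := hd 0 1
    rw [hdist a b hab] at h1
    linarith [h1.symm.trans h2]
  have hfac := gram_aux (p 0 0) (p 0 1) (p 1 0) (p 1 1) (p 2 0) (p 2 1) ⟪p 0, p 1⟫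
    (hnc 0) (hnc 1) (hnc 2) (inner2 _ _).symm
    ((inner2 _ _).symm.trans (heq 0 2 (by decide)))
    ((inner2 _ _).symm.trans (heq 1 2 (by decide)))
  have ht1 : ⟪p 0, p 1⟫ ≠ 1 := by
    intro h1
    have hz : dist (p 0) (p 1) ^ 2 = 0 := by rw [hd 0 1, h1]; ring
    have : p 0 = p 1 :=
      dist_eq_zero.1 (pow_eq_zero_iff (n := 2) (by norm_num) |>.1 hz)
    exact (by decide : (0 : Fin 3) ≠ 1) (haff.injective this)
  have htval : ⟪p 0, p 1⟫ = -(1/2) := by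
    rcases mul_eq_zero.1 hfac with h | h
    · exact absurd (by nlinarith [h] : ⟪p 0, p 1⟫ = 1) ht1
    · linarith
  refine ⟨hn, fun a b hab => (heq a b hab).trans htval, ?_⟩
  have hs : ‖p 0 + p 1 + p 2‖ ^ 2 = 0 := by
    have e01 : p 0 0 * p 1 0 + p 0 1 * p 1 1 = -(1/2) := (inner2 _ _).symm.trans htval
    have e02 : p 0 0 * p 2 0 + p 0 1 * p 2 1 = -(1/2) :=
      (inner2 _ _).symm.trans ((heq 0 2 (by decide)).trans htval)
    have e12 : p 1 0 * p 2 0 + p 1 1 * p 2 1 = -(1/2) :=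
      (inner2 _ _).symm.trans ((heq 1 2 (by decide)).trans htval)
    rw [normsq2]
    simp only [PiLp.add_apply]
    linear_combination hnc 0 + hnc 1 + hnc 2 + 2*e01 + 2*e02 + 2*e12
  simpa using pow_eq_zero_iff (n := 2) (by norm_num) |>.1 hs

lemma sum_inner_smul {p : Fin 3 → V2} (hp : Config p) (x : V2) :
    ⟪x, p 0⟫ • p 0 + ⟪x, p 1⟫ • p 1 + ⟪x, p 2⟫ • p 2 = (3/2 : ℝ) • x := by
  obtain ⟨hn, he, hs⟩ := hp
  set L : V2 := ⟪x, p 0⟫ • p 0 + ⟪x, p 1⟫ • p 1 + ⟪x, p 2⟫ • p 2 - (3/2 : ℝ) • x with hL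
  have hsum : ⟪x, p 0⟫ + ⟪x, p 1⟫ + ⟪x, p 2⟫ = 0 := by
    rw [← inner_add_right, ← inner_add_right, hs, inner_zero_right]
  have hbb : ∀ b : Fin 3, ⟪p b, p b⟫ = 1 := by
    intro b; rw [real_inner_self_eq_norm_sq, hn b]; norm_num
  have expand : ∀ b : Fin 3, ⟪L, p b⟫ = ⟪x, p 0⟫ * ⟪p 0, p b⟫ + ⟪x, p 1⟫ * ⟪p 1, p b⟫
      + ⟪x, p 2⟫ * ⟪p 2, p b⟫ - (3/2) * ⟪x, p b⟫ := by
    intro b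
    rw [hL]
    simp only [inner_sub_left, inner_add_left, real_inner_smul_left]
  have hinner0 : ⟪L, p 0⟫ = 0 := by
    rw [expand 0, hbb 0, he 1 0 (by decide), he 2 0 (by decide)]
    linarith [hsum]
  have hinner1 : ⟪L, p 1⟫ = 0 := by
    rw [expand 1, hbb 1, he 0 1 (by decide), he 2 1 (by decide)]
    linarith [hsum]
  have hA : L 0 * p 0 0 + L 1 * p 0 1 = 0 := by rw [← inner2]; exact hinner0
  have hB : L 0 * p 1 0 + L 1 * p 1 1 = 0 := by rw [← inner2]; exact hinner1
  -- p 0 and p 1 are linearly independent: cross squared = 3/4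
  have hcross : (p 0 0 * p 1 1 - p 0 1 * p 1 0) ^ 2 = 3/4 := by
    have n0 : p 0 0 ^ 2 + p 0 1 ^ 2 = 1 := by rw [← normsq2, hn 0]; norm_num
    have n1 : p 1 0 ^ 2 + p 1 1 ^ 2 = 1 := by rw [← normsq2, hn 1]; norm_num
    have e01 : p 0 0 * p 1 0 + p 0 1 * p 1 1 = -(1/2) := by
      rw [← inner2]; exact he 0 1 (by decide)
    nlinarith [n0, n1, e01]
  have hL0 : L 0 = 0 := by
    have : L 0 * (p 0 0 * p 1 1 - p 0 1 * p 1 0) = 0 := by linear_combination p 1 1 * hA - p 0 1 * hB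
    rcases mul_eq_zero.1 this with h | h
    · exact h
    · exact absurd (by rw [h]; norm_num : (p 0 0 * p 1 1 - p 0 1 * p 1 0)^2 = 0)
        (by rw [hcross]; norm_num)
  have hL1 : L 1 = 0 := by
    have : L 1 * (p 0 0 * p 1 1 - p 0 1 * p 1 0) = 0 := by linear_combination (-(p 1 0)) * hA + p 0 0 * hB
    rcases mul_eq_zero.1 this with h | h
    · exact h
    · exact absurd (by rw [h]; norm_num : (p 0 0 * p 1 1 - p 0 1 * p 1 0)^2 = 0)
        (by rw [hcross]; norm_num)
  have : L = 0 := by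
    apply ext2 <;> simp only [PiLp.zero_apply]
    exacts [hL0, hL1]
  exact sub_eq_zero.1 (hL ▸ this)



def HS (p : Fin 3 → V2) : Set V2 := {x | ∀ a, -(1/2) ≤ ⟪x, p a⟫}

lemma convexHull_subset_HS {p : Fin 3 → V2} (hp : Config p) :
    convexHull ℝ (Set.range p) ⊆ HS p := by
  apply convexHull_min
  · rintro _ ⟨b, rfl⟩ a
    rcases eq_or_ne b a with rfl | hba
    · rw [real_inner_self_eq_norm_sq, hp.1 b]; norm_num
    · rw [hp.2.1 b a hba]
  · intro x hx y hy s t hs ht hst a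
    have h1 := hx a
    have h2 := hy a
    rw [inner_add_left, real_inner_smul_left, real_inner_smul_left]
    nlinarith [mul_le_mul_of_nonneg_left h1 hs]

lemma HS_subset_convexHull {p : Fin 3 → V2} (hp : Config p) :
    HS p ⊆ convexHull ℝ (Set.range p) := by
  intro x hx
  have hsum : ⟪x, p 0⟫ + ⟪x, p 1⟫ + ⟪x, p 2⟫ = 0 := by
    rw [← inner_add_right, ← inner_add_right, hp.2.2, inner_zero_right]
  set w : Fin 3 → ℝ := fun a => 2/3 * ⟪x, p a⟫ + 1/3 with hw
  have hw0 : ∀ a ∈ Finset.univ, 0 ≤ w a := by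
    intro a _
    have := hx a
    simp only [hw]
    linarith
  have hws : ∑ a, w a = 1 := by
    rw [Fin.sum_univ_three]
    simp only [hw]
    linarith
  have hx_eq : x = ∑ a, w a • p a := by
    rw [Fin.sum_univ_three]
    have key := sum_inner_smul hp x
    have expand : w 0 • p 0 + w 1 • p 1 + w 2 • p 2
        = (2/3 : ℝ) • (⟪x, p 0⟫ • p 0 + ⟪x, p 1⟫ • p 1 + ⟪x, p 2⟫ • p 2)
          + (1/3 : ℝ) • (p 0 + p 1 + p 2) := by
      simp only [hw]
      module
    rw [expand, key, hp.2.2, smul_zero, add_zero, smul_smul]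
    norm_num
  rw [hx_eq, ← Finset.centerMass_eq_of_sum_1 _ _ hws]
  exact Finset.centerMass_mem_convexHull _ hw0 (by rw [hws]; norm_num)
    (fun i _ => Set.mem_range_self i)

lemma ball_subset_hull {p : Fin 3 → V2} (hp : Config p) :
    closedBall (0 : V2) (1/2) ⊆ convexHull ℝ (Set.range p) := by
  intro x hx
  apply HS_subset_convexHull hp
  intro a
  have h1 : ‖x‖ ≤ 1/2 := by simpa [mem_closedBall, dist_zero_right] using hx
  have h2 := abs_real_inner_le_norm x (p a)
  rw [hp.1 a, mul_one] at h2
  have := (abs_le.1 h2).1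
  linarith

def nml (u v : V2) : V2 := mk2 (u 1 - v 1) (v 0 - u 0)

@[simp] lemma nml_zero (u v : V2) : nml u v 0 = u 1 - v 1 := rfl
@[simp] lemma nml_one (u v : V2) : nml u v 1 = v 0 - u 0 := rfl

lemma inner_nml (x u v : V2) :
    ⟪x, nml u v⟫ = x 0 * (u 1 - v 1) + x 1 * (v 0 - u 0) := by
  rw [inner2]; rfl

lemma normsq_nml (u v : V2) :
    ‖nml u v‖^2 = (u 1 - v 1)^2 + (v 0 - u 0)^2 := by
  rw [normsq2]; rfl

lemma hull_inner_le {p : Fin 3 → V2} {N : V2} {e : ℝ} (h : ∀ a, ⟪p a, N⟫ ≤ e) :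
    ∀ y ∈ convexHull ℝ (Set.range p), ⟪y, N⟫ ≤ e := by
  intro y hy
  have hsub : convexHull ℝ (Set.range p) ⊆ {y | ⟪y, N⟫ ≤ e} := by
    apply convexHull_min
    · rintro _ ⟨a, rfl⟩; exact h a
    · intro x hx y' hy' s t hs ht hst
      simp only [Set.mem_setOf_eq] at hx hy' ⊢
      rw [inner_add_left, real_inner_smul_left, real_inner_smul_left]
      have h1 := mul_le_mul_of_nonneg_left hx hs
      have h2 := mul_le_mul_of_nonneg_left hy' ht
      have h3 : s*e + t*e = e := by rw [← add_mul, hst, one_mul]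
      linarith
  exact hsub hy

lemma rigidity_aux {q : Fin 3 → V2}
    (hDneg : (q 1 0 - q 0 0) * (q 2 1 - q 0 1) - (q 1 1 - q 0 1) * (q 2 0 - q 0 0) < 0)
    (hball : closedBall (0:V2) (1/2) ⊆ convexHull ℝ (Set.range q))
    (hdisk : convexHull ℝ (Set.range q) ⊆ closedBall (0:V2) 1) : Config q := by
  set D := (q 1 0 - q 0 0) * (q 2 1 - q 0 1) - (q 1 1 - q 0 1) * (q 2 0 - q 0 0) with hDdef
  have hD : D ≠ 0 := ne_of_lt hDneg
  set N0 := nml (q 1) (q 2) with hN0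
  set N1 := nml (q 2) (q 0) with hN1
  set N2 := nml (q 0) (q 1) with hN2
  have hvsq : ∀ a, ‖q a‖^2 ≤ 1 := by
    intro a
    have hmem : q a ∈ closedBall (0:V2) 1 :=
      hdisk (subset_convexHull _ _ (Set.mem_range_self a))
    have h1 : ‖q a‖ ≤ 1 := by simpa [mem_closedBall, dist_zero_right] using hmem
    nlinarith [norm_nonneg (q a)]
  have hm0 : ‖N0‖^2 = (q 1 1 - q 2 1)^2 + (q 2 0 - q 1 0)^2 := by rw [hN0, normsq_nml]
  have hm1 : ‖N1‖^2 = (q 2 1 - q 0 1)^2 + (q 0 0 - q 2 0)^2 := by rw [hN1, normsq_nml]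
  have hm2 : ‖N2‖^2 = (q 0 1 - q 1 1)^2 + (q 1 0 - q 0 0)^2 := by rw [hN2, normsq_nml]
  have hμ0 : 0 < ‖N0‖ := by
    rcases (norm_nonneg N0).lt_or_eq with h | h
    · exact h
    · exfalso
      apply hD
      have hsq : ‖N0‖^2 = 0 := by rw [← h]; norm_num
      rw [hm0] at hsq
      have h1 : q 1 1 - q 2 1 = 0 := by
        nlinarith [sq_nonneg (q 1 1 - q 2 1), sq_nonneg (q 2 0 - q 1 0)]
      have h0 : q 2 0 - q 1 0 = 0 := by
        nlinarith [sq_nonneg (q 1 1 - q 2 1), sq_nonneg (q 2 0 - q 1 0)]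
      rw [hDdef]
      linear_combination (-(q 1 0 - q 0 0)) * h1 - (q 1 1 - q 0 1) * h0
  have hμ1 : 0 < ‖N1‖ := by
    rcases (norm_nonneg N1).lt_or_eq with h | h
    · exact h
    · exfalso
      apply hD
      have hsq : ‖N1‖^2 = 0 := by rw [← h]; norm_num
      rw [hm1] at hsq
      have h1 : q 2 1 - q 0 1 = 0 := by
        nlinarith [sq_nonneg (q 2 1 - q 0 1), sq_nonneg (q 0 0 - q 2 0)]
      have h0 : q 0 0 - q 2 0 = 0 := by
        nlinarith [sq_nonneg (q 2 1 - q 0 1), sq_nonneg (q 0 0 - q 2 0)]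
      rw [hDdef]
      linear_combination (q 1 0 - q 0 0) * h1 + (q 1 1 - q 0 1) * h0
  have hμ2 : 0 < ‖N2‖ := by
    rcases (norm_nonneg N2).lt_or_eq with h | h
    · exact h
    · exfalso
      apply hD
      have hsq : ‖N2‖^2 = 0 := by rw [← h]; norm_num
      rw [hm2] at hsq
      have h1 : q 0 1 - q 1 1 = 0 := by
        nlinarith [sq_nonneg (q 0 1 - q 1 1), sq_nonneg (q 1 0 - q 0 0)]
      have h0 : q 1 0 - q 0 0 = 0 := by
        nlinarith [sq_nonneg (q 0 1 - q 1 1), sq_nonneg (q 1 0 - q 0 0)]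
      rw [hDdef]
      linear_combination (q 2 1 - q 0 1) * h0 + (q 2 0 - q 0 0) * h1
  set e0 := ⟪q 1, N0⟫ with he0
  set e1 := ⟪q 2, N1⟫ with he1
  set e2 := ⟪q 0, N2⟫ with he2
  have heq20 : ⟪q 2, N0⟫ = e0 := by rw [he0, hN0, inner_nml, inner_nml]; ring
  have heq01 : ⟪q 0, N1⟫ = e1 := by rw [he1, hN1, inner_nml, inner_nml]; ring
  have heq12 : ⟪q 1, N2⟫ = e2 := by rw [he2, hN2, inner_nml, inner_nml]; ring
  have hop0 : ⟪q 0, N0⟫ = e0 + D := by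
    rw [he0, hN0, inner_nml, inner_nml, hDdef]; ring
  have hop1 : ⟪q 1, N1⟫ = e1 + D := by
    rw [he1, hN1, inner_nml, inner_nml, hDdef]; ring
  have hop2 : ⟪q 2, N2⟫ = e2 + D := by
    rw [he2, hN2, inner_nml, inner_nml, hDdef]; ring
  have hsup : ∀ (N : V2) (e : ℝ), 0 < ‖N‖ → (∀ a, ⟪q a, N⟫ ≤ e) → ‖N‖/2 ≤ e := by
    intro N e hN hle
    have hz : (2⁻¹ * ‖N‖⁻¹) • N ∈ closedBall (0:V2) (1/2) := by
      rw [mem_closedBall, dist_zero_right, norm_smul, Real.norm_eq_abs]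
      rw [abs_of_pos (by positivity : (0:ℝ) < 2⁻¹ * ‖N‖⁻¹)]
      rw [mul_assoc, inv_mul_cancel₀ (ne_of_gt hN)]
      norm_num
    have hmem := hball hz
    have hle2 := hull_inner_le hle _ hmem
    rw [real_inner_smul_left, real_inner_self_eq_norm_sq] at hle2
    have heq : (2⁻¹ * ‖N‖⁻¹) * ‖N‖^2 = ‖N‖/2 := by
      field_simp
    linarith [heq ▸ hle2]
  have hE0 : ‖N0‖/2 ≤ e0 := by
    apply hsup N0 e0 hμ0
    intro a
    fin_cases a
    · show ⟪q 0, N0⟫ ≤ e0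
      rw [hop0]; linarith
    · show ⟪q 1, N0⟫ ≤ e0
      exact le_of_eq he0.symm
    · show ⟪q 2, N0⟫ ≤ e0
      exact le_of_eq heq20
  have hE1 : ‖N1‖/2 ≤ e1 := by
    apply hsup N1 e1 hμ1
    intro a
    fin_cases a
    · show ⟪q 0, N1⟫ ≤ e1
      exact le_of_eq heq01
    · show ⟪q 1, N1⟫ ≤ e1
      rw [hop1]; linarith
    · show ⟪q 2, N1⟫ ≤ e1
      exact le_of_eq he1.symm
  have hE2 : ‖N2‖/2 ≤ e2 := by
    apply hsup N2 e2 hμ2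
    intro a
    fin_cases a
    · show ⟪q 0, N2⟫ ≤ e2
      exact le_of_eq he2.symm
    · show ⟪q 1, N2⟫ ≤ e2
      exact le_of_eq heq12
    · show ⟪q 2, N2⟫ ≤ e2
      rw [hop2]; linarith
  set t01 := ⟪N0, N1⟫ with ht01
  set t02 := ⟪N0, N2⟫ with ht02
  set t12 := ⟪N1, N2⟫ with ht12
  have ht01c : t01 = (q 1 1 - q 2 1)*(q 2 1 - q 0 1) + (q 2 0 - q 1 0)*(q 0 0 - q 2 0) := by
    rw [ht01, hN0, hN1, inner_nml]
    simp only [nml_zero, nml_one]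
    try ring
  have ht02c : t02 = (q 1 1 - q 2 1)*(q 0 1 - q 1 1) + (q 2 0 - q 1 0)*(q 1 0 - q 0 0) := by
    rw [ht02, hN0, hN2, inner_nml]
    simp only [nml_zero, nml_one]
    try ring
  have ht12c : t12 = (q 2 1 - q 0 1)*(q 0 1 - q 1 1) + (q 0 0 - q 2 0)*(q 1 0 - q 0 0) := by
    rw [ht12, hN1, hN2, inner_nml]
    simp only [nml_zero, nml_one]
    try ring
  have hD201 : ‖N0‖^2*‖N1‖^2 - t01^2 = D^2 := by
    rw [hm0, hm1, ht01c, hDdef]; ring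
  have hD202 : ‖N0‖^2*‖N2‖^2 - t02^2 = D^2 := by
    rw [hm0, hm2, ht02c, hDdef]; ring
  have hD212 : ‖N1‖^2*‖N2‖^2 - t12^2 = D^2 := by
    rw [hm1, hm2, ht12c, hDdef]; ring
  have hid01 : e0^2*‖N1‖^2 + e1^2*‖N0‖^2 - 2*t01*e0*e1 = D^2 * ‖q 2‖^2 := by
    rw [← heq20, he1, hm0, hm1, ht01c, hDdef, normsq2, hN0, hN1, inner_nml, inner_nml]
    ring
  have hid02 : e0^2*‖N2‖^2 + e2^2*‖N0‖^2 - 2*t02*e0*e2 = D^2 * ‖q 1‖^2 := by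
    rw [he0, ← heq12, hm0, hm2, ht02c, hDdef, normsq2, hN0, hN2, inner_nml, inner_nml]
    ring
  have hid12 : e1^2*‖N2‖^2 + e2^2*‖N1‖^2 - 2*t12*e1*e2 = D^2 * ‖q 0‖^2 := by
    rw [← heq01, he2, hm1, hm2, ht12c, hDdef, normsq2, hN1, hN2, inner_nml, inner_nml]
    ring
  have h01 := step2 ‖N0‖ ‖N1‖ e0 e1 t01 D (‖q 2‖^2) hμ0 hμ1 hE0 hE1
    (by positivity) (hvsq 2) hD201 hD hid01
  have h02 := step2 ‖N0‖ ‖N2‖ e0 e2 t02 D (‖q 1‖^2) hμ0 hμ2 hE0 hE2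
    (by positivity) (hvsq 1) hD202 hD hid02
  have h12 := step2 ‖N1‖ ‖N2‖ e1 e2 t12 D (‖q 0‖^2) hμ1 hμ2 hE1 hE2
    (by positivity) (hvsq 0) hD212 hD hid12
  have hsum : ‖N0‖^2 + ‖N1‖^2 + ‖N2‖^2 + 2*(t01+t02+t12) = 0 := by
    rw [hm0, hm1, hm2, ht01c, ht02c, ht12c]; ring
  obtain ⟨hμ01, hμ02, hz01, hz02, hz12⟩ :=
    step4 ‖N0‖ ‖N1‖ ‖N2‖ t01 t02 t12 h01 h02 h12 hsum
  have hμ1e : ‖N1‖ = ‖N0‖ := hμ01.symm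
  have hμ2e : ‖N2‖ = ‖N0‖ := hμ02.symm
  rw [hμ1e] at hz01
  rw [hμ2e] at hz02
  rw [hμ1e, hμ2e] at hz12
  have ht01v : t01 = -(‖N0‖^2)/2 := by linear_combination hz01/2
  have ht02v : t02 = -(‖N0‖^2)/2 := by linear_combination hz02/2
  have ht12v : t12 = -(‖N0‖^2)/2 := by linear_combination hz12/2
  have hD2v : D^2 = (3/4)*‖N0‖^4 := by
    rw [hμ1e, ht01v] at hD201
    linear_combination -hD201
  rw [hμ1e] at hE1
  rw [hμ2e] at hE2
  have hid01' : e0^2*‖N0‖^2 + e1^2*‖N0‖^2 + ‖N0‖^2*(e0*e1) = (3/4)*‖N0‖^4*(‖q 2‖^2) := by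
    rw [hμ1e, ht01v, hD2v] at hid01
    linear_combination hid01
  have hid02' : e0^2*‖N0‖^2 + e2^2*‖N0‖^2 + ‖N0‖^2*(e0*e2) = (3/4)*‖N0‖^4*(‖q 1‖^2) := by
    rw [hμ2e, ht02v, hD2v] at hid02
    linear_combination hid02
  have hid12' : e1^2*‖N0‖^2 + e2^2*‖N0‖^2 + ‖N0‖^2*(e1*e2) = (3/4)*‖N0‖^4*(‖q 0‖^2) := by
    rw [hμ1e, hμ2e, ht12v, hD2v] at hid12
    linear_combination hid12
  obtain ⟨hE0v, hE1v, hn2⟩ := step5 ‖N0‖ e0 e1 (‖q 2‖^2) hμ0 hE0 hE1 (hvsq 2) hid01'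
  obtain ⟨-, hE2v, hn1⟩ := step5 ‖N0‖ e0 e2 (‖q 1‖^2) hμ0 hE0 hE2 (hvsq 1) hid02'
  obtain ⟨-, -, hn0⟩ := step5 ‖N0‖ e1 e2 (‖q 0‖^2) hμ0 hE1 hE2 (hvsq 0) hid12'
  -- vector sum of normals
  have hNvec : N0 + N1 + N2 = 0 := by
    rw [hN0, hN1, hN2]
    apply ext2 <;>
      simp only [PiLp.add_apply, PiLp.zero_apply, nml_zero, nml_one] <;> ring
  -- inner of vertex with its own normal
  have hself0 : ⟪q 0, N0⟫ = -‖N0‖ := by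
    have h : ⟪q 0, N0⟫ + ⟪q 0, N1⟫ + ⟪q 0, N2⟫ = 0 := by
      rw [← inner_add_right, ← inner_add_right, hNvec, inner_zero_right]
    rw [heq01, ← he2, hE1v, hE2v] at h
    linarith
  have hself1 : ⟪q 1, N1⟫ = -‖N0‖ := by
    have h : ⟪q 1, N0⟫ + ⟪q 1, N1⟫ + ⟪q 1, N2⟫ = 0 := by
      rw [← inner_add_right, ← inner_add_right, hNvec, inner_zero_right]
    rw [← he0, heq12, hE0v, hE2v] at h
    linarith
  have hself2 : ⟪q 2, N2⟫ = -‖N0‖ := by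
    have h : ⟪q 2, N0⟫ + ⟪q 2, N1⟫ + ⟪q 2, N2⟫ = 0 := by
      rw [← inner_add_right, ← inner_add_right, hNvec, inner_zero_right]
    rw [heq20, ← he1, hE0v, hE1v] at h
    linarith
  -- vertices are rescaled negated normals
  have key : ∀ (x N : V2), ‖x‖^2 = 1 → ‖N‖ = ‖N0‖ → ⟪x, N⟫ = -‖N0‖ →
      x = -(‖N0‖⁻¹) • N := by
    intro x N hx hNn hxN
    have hzero : ‖x + ‖N0‖⁻¹ • N‖^2 = 0 := by
      rw [norm_add_sq_real, real_inner_smul_right, hxN, norm_smul, Real.norm_eq_abs, hNn]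
      rw [hx]
      have hne : ‖N0‖ ≠ 0 := ne_of_gt hμ0
      field_simp
      rw [abs_of_pos (by positivity : (0:ℝ) < 1/‖N0‖)]
      field_simp
      norm_num
    have hz := pow_eq_zero_iff (n := 2) (by norm_num) |>.1 hzero
    have hzv : x + ‖N0‖⁻¹ • N = 0 := norm_eq_zero.1 hz
    have hx2 : x = -(‖N0‖⁻¹ • N) := eq_neg_of_add_eq_zero_left hzv
    rw [hx2, ← neg_smul]
  have hq0v : q 0 = -(‖N0‖⁻¹) • N0 := key (q 0) N0 hn0 rfl hself0
  have hq1v : q 1 = -(‖N0‖⁻¹) • N1 := key (q 1) N1 hn1 hμ1e hself1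
  have hq2v : q 2 = -(‖N0‖⁻¹) • N2 := key (q 2) N2 hn2 hμ2e hself2
  have hnorm : ∀ a, ‖q a‖ = 1 := by
    intro a
    have h2 : ‖q a‖^2 = 1 := by fin_cases a; exacts [hn0, hn1, hn2]
    have h3 : (‖q a‖ - 1)*(‖q a‖ + 1) = 0 := by linear_combination h2
    rcases mul_eq_zero.1 h3 with h | h
    · linarith [sub_eq_zero.1 h]
    · linarith [norm_nonneg (q a)]
  have hi : ∀ (Na Nb : V2), ⟪Na, Nb⟫ = -(‖N0‖^2)/2 →
      ⟪-(‖N0‖⁻¹) • Na, -(‖N0‖⁻¹) • Nb⟫ = -(1/2) := by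
    intro Na Nb h
    rw [real_inner_smul_left, real_inner_smul_right, h]
    have hne : ‖N0‖ ≠ 0 := ne_of_gt hμ0
    field_simp
  have i01 : ⟪q 0, q 1⟫ = -(1/2) := by
    rw [hq0v, hq1v]; exact hi N0 N1 (ht01.symm.trans ht01v)
  have i02 : ⟪q 0, q 2⟫ = -(1/2) := by
    rw [hq0v, hq2v]; exact hi N0 N2 (ht02.symm.trans ht02v)
  have i12 : ⟪q 1, q 2⟫ = -(1/2) := by
    rw [hq1v, hq2v]; exact hi N1 N2 (ht12.symm.trans ht12v)
  have i10 : ⟪q 1, q 0⟫ = -(1/2) := by rw [real_inner_comm]; exact i01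
  have i20 : ⟪q 2, q 0⟫ = -(1/2) := by rw [real_inner_comm]; exact i02
  have i21 : ⟪q 2, q 1⟫ = -(1/2) := by rw [real_inner_comm]; exact i12
  refine ⟨hnorm, ?_, ?_⟩
  · intro a b hab
    fin_cases a <;> fin_cases b <;>
      first
        | exact absurd rfl hab
        | exact i01
        | exact i02
        | exact i12
        | exact i10
        | exact i20
        | exact i21
  · rw [hq0v, hq1v, hq2v, ← smul_add, ← smul_add, hNvec, smul_zero]

lemma rigidity {q : Fin 3 → V2} (hq : AffineIndependent ℝ q)
    (hball : closedBall (0:V2) (1/2) ⊆ convexHull ℝ (Set.range q))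
    (hdisk : convexHull ℝ (Set.range q) ⊆ closedBall (0:V2) 1) : Config q := by
  have hD := cross_ne_zero hq
  rcases lt_or_gt_of_ne hD with h | h
  · exact rigidity_aux h hball hdisk
  · set e : Fin 3 ≃ Fin 3 := Equiv.swap 1 2 with he
    have h0 : q (e 0) = q 0 := by
      rw [he, Equiv.swap_apply_of_ne_of_ne (by decide) (by decide)]
    have h1 : q (e 1) = q 2 := by rw [he, Equiv.swap_apply_left]
    have h2 : q (e 2) = q 1 := by rw [he, Equiv.swap_apply_right]
    have hrange : Set.range (q ∘ e) = Set.range q := e.surjective.range_comp q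
    have haux : Config (q ∘ e) := by
      apply rigidity_aux
      · show ((q ∘ e) 1 0 - (q ∘ e) 0 0) * ((q ∘ e) 2 1 - (q ∘ e) 0 1)
            - ((q ∘ e) 1 1 - (q ∘ e) 0 1) * ((q ∘ e) 2 0 - (q ∘ e) 0 0) < 0
        simp only [Function.comp_apply]
        rw [h0, h1, h2]
        have heq : (q 2 0 - q 0 0)*(q 1 1 - q 0 1) - (q 2 1 - q 0 1)*(q 1 0 - q 0 0)
            = -((q 1 0 - q 0 0) * (q 2 1 - q 0 1) - (q 1 1 - q 0 1) * (q 2 0 - q 0 0)) := by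
          ring
        rw [heq]
        linarith
      · rw [hrange]; exact hball
      · rw [hrange]; exact hdisk
    obtain ⟨hn, hi, hs⟩ := haux
    refine ⟨?_, ?_, ?_⟩
    · intro a
      have := hn (e.symm a)
      simpa [Function.comp_apply, Equiv.apply_symm_apply] using this
    · intro a b hab
      have := hi (e.symm a) (e.symm b) (fun hcon => hab (e.symm.injective hcon))
      simpa [Function.comp_apply, Equiv.apply_symm_apply] using this
    · have hsum : q (e 0) + q (e 1) + q (e 2) = 0 := hs
      rw [h0, h1, h2] at hsum
      rw [← hsum]
      exact (add_right_comm _ _ _).symm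

lemma config_ne {p : Fin 3 → V2} (hp : Config p) {a b : Fin 3} (hab : a ≠ b) :
    p a ≠ p b := by
  intro h
  have h1 := hp.2.1 a b hab
  rw [h] at h1
  rw [real_inner_self_eq_norm_sq, hp.1 b] at h1
  norm_num at h1

lemma range3 (p : Fin 3 → V2) : Set.range p = {p 0, p 1, p 2} := by
  ext x
  constructor
  · rintro ⟨a, rfl⟩
    fin_cases a
    · exact Set.mem_insert _ _
    · exact Set.mem_insert_of_mem _ (Set.mem_insert _ _)
    · exact Set.mem_insert_of_mem _ (Set.mem_insert_of_mem _ rfl)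
  · rintro (rfl | rfl | rfl)
    · exact ⟨0, rfl⟩
    · exact ⟨1, rfl⟩
    · exact ⟨2, rfl⟩

/-- any unit vector at inner product -1/2 from a unit vector g is one of two points -/
lemma char_sol {g x : V2} (hg : ‖g‖ = 1) (hx : ‖x‖ = 1) (hdot : ⟪x, g⟫ = -(1/2)) :
    x = mk2 (-(g 0)/2 + (Real.sqrt 3/2) * g 1) (-(g 1)/2 - (Real.sqrt 3/2) * g 0) ∨
    x = mk2 (-(g 0)/2 - (Real.sqrt 3/2) * g 1) (-(g 1)/2 + (Real.sqrt 3/2) * g 0) := by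
  have hgc : g 0^2 + g 1^2 = 1 := by rw [← normsq2, hg]; norm_num
  have hxc : x 0^2 + x 1^2 = 1 := by rw [← normsq2, hx]; norm_num
  have hdc : x 0 * g 0 + x 1 * g 1 = -(1/2) := by rw [← inner2]; exact hdot
  set κ := x 0 * g 1 - x 1 * g 0 with hκdef
  have hκ : κ^2 = 3/4 := by
    rw [hκdef]
    nlinarith [hgc, hxc, hdc]
  have hs2 : (Real.sqrt 3/2)^2 = 3/4 := by
    rw [div_pow, Real.sq_sqrt (by norm_num : (3:ℝ) ≥ 0)]
    norm_num
  have hfac : (κ - Real.sqrt 3/2) * (κ + Real.sqrt 3/2) = 0 := by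
    linear_combination hκ - hs2
  have hx0 : x 0 = -(g 0)/2 + κ * g 1 := by
    linear_combination g 0 * hdc + g 1 * hκdef.symm - x 0 * hgc
  have hx1 : x 1 = -(g 1)/2 - κ * g 0 := by
    linear_combination g 1 * hdc - g 0 * hκdef.symm - x 1 * hgc
  rcases mul_eq_zero.1 hfac with h | h
  · left
    have hκv : κ = Real.sqrt 3/2 := by linarith
    apply ext2
    · rw [mk2_zero, hx0, hκv]
    · rw [mk2_one, hx1, hκv]
  · right
    have hκv : κ = -(Real.sqrt 3/2) := by linarith
    apply ext2
    · rw [mk2_zero, hx0, hκv]; ring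
    · rw [mk2_one, hx1, hκv]; ring

lemma range_eq_of_shared {p r : Fin 3 → V2} (hp : Config p) (hr : Config r)
    (b : Fin 3) (hsh : r 0 = p b) : Set.range r = Set.range p := by
  obtain ⟨b1, b2, hb1, hb2, hb12, hset⟩ : ∃ b1 b2 : Fin 3, b ≠ b1 ∧ b ≠ b2 ∧ b1 ≠ b2 ∧
      ({p b, p b1, p b2} : Set V2) = {p 0, p 1, p 2} := by
    fin_cases b
    · exact ⟨1, 2, by decide, by decide, by decide, rfl⟩
    · refine ⟨0, 2, by decide, by decide, by decide, ?_⟩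
      ext x
      simp only [Set.mem_insert_iff, Set.mem_singleton_iff]
      tauto
    · refine ⟨0, 1, by decide, by decide, by decide, ?_⟩
      ext x
      simp only [Set.mem_insert_iff, Set.mem_singleton_iff]
      tauto
  have hg : ‖p b‖ = 1 := hp.1 b
  have c1 := char_sol hg (hr.1 1) (by rw [← hsh]; exact hr.2.1 1 0 (by decide))
  have c2 := char_sol hg (hr.1 2) (by rw [← hsh]; exact hr.2.1 2 0 (by decide))
  have c3 := char_sol hg (hp.1 b1) (hp.2.1 b1 b (Ne.symm hb1))
  have c4 := char_sol hg (hp.1 b2) (hp.2.1 b2 b (Ne.symm hb2))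
  have hr12 : r 1 ≠ r 2 := config_ne hr (by decide)
  have hp12 : p b1 ≠ p b2 := config_ne hp hb12
  rw [range3 r, range3 p, ← hset, hsh]
  rcases c1 with h1 | h1 <;> rcases c2 with h2 | h2 <;>
    rcases c3 with h3 | h3 <;> rcases c4 with h4 | h4 <;>
    first
      | (exact absurd (h1.trans h2.symm) hr12)
      | (exact absurd (h3.trans h4.symm) hp12)
      | (rw [h1.trans h3.symm, h2.trans h4.symm])
      | (rw [h1.trans h4.symm, h2.trans h3.symm]
         ext x
         simp only [Set.mem_insert_iff, Set.mem_singleton_iff]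
         tauto)

lemma inner_lt_one {u w : V2} (hu : ‖u‖ = 1) (hw : ‖w‖ = 1) (hne : u ≠ w) :
    ⟪u, w⟫ < 1 := by
  have h1 : 0 < ‖u - w‖ := norm_sub_pos_iff.2 hne
  have h2 : 0 < ‖u - w‖^2 := by positivity
  rw [norm_sub_sq_real, hu, hw] at h2
  nlinarith

end Stmt13


open Metric Stmt13 RealInnerProductSpace in
theorem stmt_13 {n : ℕ} (hn : 1 ≤ n) (v : Fin n → Fin 3 → EuclideanSpace ℝ (Fin 2))
    (hins : ∀ i, InscribedEquilateral (v i))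
    (hdist : ∀ i j, i ≠ j →
      convexHull ℝ (Set.range (v i)) ≠ convexHull ℝ (Set.range (v j)))
    (S : Set (EuclideanSpace ℝ (Fin 2)))
    (hS : S = Set.extremePoints ℝ (⋂ i, convexHull ℝ (Set.range (v i))))
    (q : Fin 3 → EuclideanSpace ℝ (Fin 2)) (hq : AffineIndependent ℝ q)
    (hSq : S ⊆ convexHull ℝ (Set.range q))
    (hqC : convexHull ℝ (Set.range q) ⊆ closedBall (0 : EuclideanSpace ℝ (Fin 2)) 1) :
    ∃ i, convexHull ℝ (Set.range q) = convexHull ℝ (Set.range (v i)) := by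
  have hcfg : ∀ i, Config (v i) := fun i =>
    config_of_inscribed (hins i).1 (hins i).2.1 (hins i).2.2
  set K := ⋂ i, convexHull ℝ (Set.range (v i)) with hK
  have hKconv : Convex ℝ K := convex_iInter (fun i => convex_convexHull _ _)
  have i0 : Fin n := ⟨0, hn⟩
  have hKcomp : IsCompact K :=
    IsCompact.of_isClosed_subset ((Set.finite_range (v i0)).isCompact_convexHull ℝ)
      (isClosed_iInter (fun i => (Set.finite_range (v i)).isClosed_convexHull ℝ))
      (Set.iInter_subset _ i0)
  have hKM := closure_convexHull_extremePoints hKcomp hKconv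
  have hKT : K ⊆ convexHull ℝ (Set.range q) := by
    rw [← hKM]
    apply closure_minimal
    · apply convexHull_min _ (convex_convexHull _ _)
      rw [← hS]
      exact hSq
    · exact (Set.finite_range q).isClosed_convexHull ℝ
  have hballK : closedBall (0:V2) (1/2) ⊆ K :=
    Set.subset_iInter (fun i => ball_subset_hull (hcfg i))
  have hcq : Config q := rigidity hq (hballK.trans hKT) hqC
  by_contra hcon
  push_neg at hcon
  have hnv : ∀ i a, q 0 ≠ v i a := by
    intro i a h
    exact hcon i (by rw [range_eq_of_shared (hcfg i) hcq a h])
  have hne : (Finset.univ : Finset (Fin n × Fin 3)).Nonempty := ⟨(i0, 0), Finset.mem_univ _⟩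
  set M := Finset.univ.sup' hne (fun ia : Fin n × Fin 3 => ⟪q 0, v ia.1 ia.2⟫) with hM
  have hMlt : M < 1 := by
    rw [hM]
    apply (Finset.sup'_lt_iff hne).2
    intro ia _
    exact inner_lt_one (hcq.1 0) ((hcfg ia.1).1 ia.2) (hnv ia.1 ia.2)
  have hMge : ∀ i a, ⟪q 0, v i a⟫ ≤ M := fun i a =>
    Finset.le_sup' (f := fun ia : Fin n × Fin 3 => ⟪q 0, v ia.1 ia.2⟫) (Finset.mem_univ (i, a))
  set z : V2 := (-((2 - M)/2)) • q 0 with hz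
  have hzK : z ∈ K := by
    apply Set.mem_iInter.2
    intro i
    apply HS_subset_convexHull (hcfg i)
    intro a
    rw [hz, real_inner_smul_left]
    have hm := hMge i a
    have h2M : (0:ℝ) ≤ 2 - M := by linarith
    have hstep : (2 - M) * ⟪q 0, v i a⟫ ≤ (2 - M) * M := mul_le_mul_of_nonneg_left hm h2M
    nlinarith [sq_nonneg (M - 1)]
  have hzT := hKT hzK
  have hzHS := convexHull_subset_HS hcq hzT 0
  rw [hz, real_inner_smul_left, real_inner_self_eq_norm_sq, hcq.1 0] at hzHS
  norm_num at hzHS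
  linarith
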